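/- A Feynman graph is connected if and only if it is path connected. -/

import Mathlib

/-- A Feynman graph: finite sets of edges `E`, half-edges `H`, vertices `V`,
with an injective attachment `s : H → E`, a target map `t : H → V`, and a
fixed-point-free involution `inv : E → E`. -/
structure FG where
  E : Type
  H : Type
  V : Type
  finE : Finite E
  finH : Finite H
  finV : Finite V
  s : H → E
  t : H → V
  inv : E → E
  s_inj : Function.Injective s
  inv_inv : ∀ e, inv (inv e) = e
  inv_ne : ∀ e, inv e ≠ e

attribute [instance] FG.finE FG.finH FG.finV

/-- A morphism of Feynman graphs. -/
structure FGHom (G G' : FG) where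
  fE : G.E → G'.E
  fH : G.H → G'.H
  fV : G.V → G'.V
  comm_inv : ∀ e, fE (G.inv e) = G'.inv (fE e)
  comm_s : ∀ h, fE (G.s h) = G'.s (fH h)
  comm_t : ∀ h, fV (G.t h) = G'.t (fH h)

/-- Composition of morphisms of Feynman graphs. -/
def FGHom.comp {G₁ G₂ G₃ : FG} (g : FGHom G₂ G₃) (f : FGHom G₁ G₂) : FGHom G₁ G₃ where
  fE := g.fE ∘ f.fE
  fH := g.fH ∘ f.fH
  fV := g.fV ∘ f.fV
  comm_inv := fun e => by simp only [Function.comp_apply, f.comm_inv, g.comm_inv]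
  comm_s := fun h => by simp only [Function.comp_apply, f.comm_s, g.comm_s]
  comm_t := fun h => by simp only [Function.comp_apply, f.comm_t, g.comm_t]

/-- A morphism is an isomorphism if all three components are bijections. -/
def FGHom.IsIso {G G' : FG} (f : FGHom G G') : Prop :=
  Function.Bijective f.fE ∧ Function.Bijective f.fH ∧ Function.Bijective f.fV

/-- A morphism is locally injective if it is injective on each fibre `t⁻¹(v)`. -/
def FGHom.LocInj {G G' : FG} (f : FGHom G G') : Prop :=
  ∀ h₁ h₂ : G.H, G.t h₁ = G.t h₂ → f.fH h₁ = f.fH h₂ → h₁ = h₂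

/-- A morphism is étale if it induces a bijection `t⁻¹(v) → t'⁻¹(f_V v)`
for every vertex `v`. -/
def FGHom.Etale {G G' : FG} (f : FGHom G G') : Prop :=
  f.LocInj ∧
  ∀ (v : G.V) (h' : G'.H), G'.t h' = f.fV v → ∃ h : G.H, G.t h = v ∧ f.fH h = h'

/-- A port is an edge not in the image of `s`. -/
def FG.IsPort (G : FG) (e : G.E) : Prop := e ∉ Set.range G.s

/-- An inner edge: both `e` and `inv e` are in the image of `s`. -/
def FG.IsInner (G : FG) (e : G.E) : Prop :=
  e ∈ Set.range G.s ∧ G.inv e ∈ Set.range G.s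

/-- Connectedness: `E ⊔ V` is nonempty and every compatible `Bool`-colouring
of edges and vertices is constant. -/
def FG.Connected (G : FG) : Prop :=
  Nonempty (G.E ⊕ G.V) ∧
  ∀ (cE : G.E → Bool) (cV : G.V → Bool),
    (∀ e, cE (G.inv e) = cE e) →
    (∀ h, cV (G.t h) = cE (G.s h)) →
    ∀ x y : G.E ⊕ G.V, Sum.elim cE cV x = Sum.elim cE cV y

/-- The line graph `L^k` (for `k ≥ 0`): edges `l_0, …, l_{2k+1}` (here the pair
`{l_{2j}, l_{2j+1}}` is encoded as `(j, false)` and `(j, true)`), `k` vertices,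
and `2k` half-edges attaching `l_{2i-1}` and `l_{2i}` to the vertex `v_i`. -/
def lineGraph (k : ℕ) : FG where
  E := Fin (k+1) × Bool
  H := Fin k × Bool
  V := Fin k
  finE := inferInstance
  finH := inferInstance
  finV := inferInstance
  s := fun p => if p.2 then (p.1.castSucc, true) else (p.1.succ, false)
  t := fun p => p.1
  inv := fun p => (p.1, !p.2)
  s_inj := by
    rintro ⟨i, bi⟩ ⟨j, bj⟩ hij
    cases bi <;> cases bj <;> simp_all [Fin.succ_inj, Fin.castSucc_inj]
  inv_inv := by rintro ⟨i, b⟩; simp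
  inv_ne := by
    rintro ⟨i, b⟩ h
    rw [Prod.mk.injEq] at h
    exact (Bool.not_ne_self b) h.2

/-- The wheel graph `W^{m+1}` (this definition, with parameter `m : ℕ`, yields
exactly the wheel graphs `W^m` for `m ≥ 1`): `m+1` vertices in `Fin (m+1)`,
the vertex `i` carrying the two edges `(i, false)` and `(i, true)` (which are
also the half-edges, via `s = id`), and the involution pairing `(i, true)`
with `(i+1, false)` cyclically. -/
def wheelGraph (m : ℕ) : FG where
  E := Fin (m+1) × Bool
  H := Fin (m+1) × Bool
  V := Fin (m+1)
  finE := inferInstance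
  finH := inferInstance
  finV := inferInstance
  s := id
  t := fun p => p.1
  inv := fun p => if p.2 then (p.1 + 1, false) else (p.1 - 1, true)
  s_inj := fun _ _ h => h
  inv_inv := by
    rintro ⟨i, b⟩
    cases b <;> simp
  inv_ne := by
    rintro ⟨i, b⟩ h
    cases b <;> simp_all

/-- An element of `E ⊔ V` lies in the image of a path `p : L^k → G` (on edges
and vertices respectively). -/
def InPathImage {k : ℕ} {G : FG} (p : FGHom (lineGraph k) G) : G.E ⊕ G.V → Prop :=
  Sum.elim (fun e => ∃ a, p.fE a = e) (fun v => ∃ a, p.fV a = v)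

/-- A Feynman graph is path connected if `E ⊔ V` is nonempty and every two
distinct elements of `E ⊔ V` are connected by a path. -/
def FG.PathConnected (G : FG) : Prop :=
  Nonempty (G.E ⊕ G.V) ∧
  ∀ x y : G.E ⊕ G.V, x ≠ y →
    ∃ (k : ℕ) (p : FGHom (lineGraph k) G), InPathImage p x ∧ InPathImage p y

namespace FGaux

variable {G : FG}

lemma fE_true {k : ℕ} (p : FGHom (lineGraph k) G) (j : Fin (k+1)) :
    p.fE (j, true) = G.inv (p.fE (j, false)) := by
  have := p.comm_inv (j, false)
  simpa [lineGraph] using this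

lemma fE_step {k : ℕ} (p : FGHom (lineGraph k) G) (i : Fin k) :
    p.fE (i.succ, false) = G.s (p.fH (i, false)) := by
  simpa [lineGraph] using p.comm_s (i, false)

lemma fE_step' {k : ℕ} (p : FGHom (lineGraph k) G) (i : Fin k) :
    p.fE (i.castSucc, true) = G.s (p.fH (i, true)) := by
  simpa [lineGraph] using p.comm_s (i, true)

lemma fV_t {k : ℕ} (p : FGHom (lineGraph k) G) (i : Fin k) (b : Bool) :
    G.t (p.fH (i, b)) = p.fV i := by
  simpa [lineGraph] using (p.comm_t (i, b)).symm

/-- The length-0 path through an edge pair. -/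
def pathSingleton (e : G.E) : FGHom (lineGraph 0) G where
  fE := fun q => if q.2 then G.inv e else e
  fH := fun q => q.1.elim0
  fV := fun i => i.elim0
  comm_inv := by rintro ⟨j, b⟩; cases b <;> simp [lineGraph, G.inv_inv]
  comm_s := by rintro ⟨i, b⟩; exact i.elim0
  comm_t := by rintro ⟨i, b⟩; exact i.elim0

/-- The length-1 path that goes along `s h` into the vertex `t h` and back. -/
def pathOne (h : G.H) : FGHom (lineGraph 1) G where
  fE := fun q => if (q.1 = 0) = (q.2 = true) then G.s h else G.inv (G.s h)
  fH := fun _ => h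
  fV := fun _ => G.t h
  comm_inv := by
    rintro ⟨j, b⟩
    by_cases hj : j = 0 <;> cases b <;> simp [lineGraph, hj, G.inv_inv]
  comm_s := by
    rintro ⟨i, b⟩
    have hi : i = 0 := Subsingleton.elim _ _
    subst hi
    cases b <;> simp [lineGraph, Fin.ext_iff]
  comm_t := by rintro ⟨i, b⟩; rfl

/-- Appending a step at the end of a path, given a half-edge attached to the
free end of the last edge pair. -/
def append {k : ℕ} (p : FGHom (lineGraph k) G) (h : G.H)
    (hh : G.s h = G.inv (p.fE (Fin.last k, false))) :
    FGHom (lineGraph (k+1)) G where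
  fE := fun q => Fin.lastCases (if q.2 then G.inv (G.s h) else G.s h)
    (fun j => p.fE (j, q.2)) q.1
  fH := fun q => Fin.lastCases h (fun i => p.fH (i, q.2)) q.1
  fV := fun i => Fin.lastCases (G.t h) (fun i' => p.fV i') i
  comm_inv := by
    rintro ⟨j, b⟩
    simp only [lineGraph]
    induction j using Fin.lastCases with
    | last => cases b <;> simp [lineGraph, G.inv_inv]
    | cast j' =>
      cases b <;>
        simp [lineGraph, Fin.lastCases_castSucc, fE_true, G.inv_inv]
  comm_s := by
    rintro ⟨i, b⟩
    induction i using Fin.lastCases with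
    | last =>
      cases b <;>
        simp [lineGraph, Fin.succ_last, Fin.lastCases_castSucc, fE_true, hh]
    | cast i' =>
      cases b <;>
        simp [lineGraph, Fin.succ_castSucc, Fin.lastCases_castSucc,
          fE_step, fE_step', -Fin.castSucc_succ]
  comm_t := by
    rintro ⟨i, b⟩
    induction i using Fin.lastCases with
    | last => simp [lineGraph]
    | cast i' => simp [lineGraph, Fin.lastCases_castSucc, fV_t]

/-- Replace the last edge pair of a path by `s h`, where `h` is a half-edge at
the last vertex. -/
def replaceLast {k : ℕ} (p : FGHom (lineGraph (k+1)) G) (h : G.H)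
    (ht : G.t h = p.fV (Fin.last k)) :
    FGHom (lineGraph (k+1)) G where
  fE := fun q => Fin.lastCases (if q.2 then G.inv (G.s h) else G.s h)
    (fun j => p.fE (j.castSucc, q.2)) q.1
  fH := fun q => Fin.lastCases (if q.2 then p.fH (Fin.last k, true) else h)
    (fun i => p.fH (i.castSucc, q.2)) q.1
  fV := p.fV
  comm_inv := by
    rintro ⟨j, b⟩
    simp only [lineGraph]
    induction j using Fin.lastCases with
    | last => cases b <;> simp [G.inv_inv]
    | cast j' =>
      cases b <;> simp [Fin.lastCases_castSucc, fE_true, G.inv_inv]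
  comm_s := by
    rintro ⟨i, b⟩
    induction i using Fin.lastCases with
    | last =>
      cases b <;>
        simp [lineGraph, Fin.succ_last, Fin.lastCases_castSucc, fE_step']
    | cast i' =>
      cases b <;>
        simp [lineGraph, Fin.lastCases_castSucc, ← fE_step, ← fE_step',
          Fin.succ_castSucc, -Fin.castSucc_succ]
  comm_t := by
    rintro ⟨i, b⟩
    induction i using Fin.lastCases with
    | last => cases b <;> simp [lineGraph, fV_t, ht]
    | cast i' => simp [lineGraph, Fin.lastCases_castSucc, fV_t]

lemma append_fE_cast {k : ℕ} (p : FGHom (lineGraph k) G) (h : G.H) (hh)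
    (j : Fin (k+1)) (b : Bool) :
    (append p h hh).fE (j.castSucc, b) = p.fE (j, b) := by
  simp [append, Fin.lastCases_castSucc]

lemma append_fV_cast {k : ℕ} (p : FGHom (lineGraph k) G) (h : G.H) (hh)
    (i : Fin k) :
    (append p h hh).fV i.castSucc = p.fV i := by
  simp only [append]
  exact Fin.lastCases_castSucc ..

lemma append_fE_last {k : ℕ} (p : FGHom (lineGraph k) G) (h : G.H) (hh)
    (b : Bool) :
    (append p h hh).fE (Fin.last (k+1), b) =
      if b then G.inv (G.s h) else G.s h := by
  simp [append]

lemma append_fV_last {k : ℕ} (p : FGHom (lineGraph k) G) (h : G.H) (hh) :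
    (append p h hh).fV (Fin.last k) = G.t h := by
  simp only [append]
  exact Fin.lastCases_last ..

lemma replaceLast_fE_cast {k : ℕ} (p : FGHom (lineGraph (k+1)) G) (h : G.H)
    (ht) (j : Fin (k+1)) (b : Bool) :
    (replaceLast p h ht).fE (j.castSucc, b) = p.fE (j.castSucc, b) := by
  simp [replaceLast, Fin.lastCases_castSucc]

lemma replaceLast_fE_last {k : ℕ} (p : FGHom (lineGraph (k+1)) G) (h : G.H)
    (ht) (b : Bool) :
    (replaceLast p h ht).fE (Fin.last (k+1), b) =
      if b then G.inv (G.s h) else G.s h := by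
  simp [replaceLast]

lemma replaceLast_fV {k : ℕ} (p : FGHom (lineGraph (k+1)) G) (h : G.H) (ht) :
    (replaceLast p h ht).fV = p.fV := rfl

/-- One-step adjacency on `E ⊔ V`. -/
inductive Step (G : FG) : (G.E ⊕ G.V) → (G.E ⊕ G.V) → Prop
  | inv (e : G.E) : Step G (Sum.inl e) (Sum.inl (G.inv e))
  | half (h : G.H) : Step G (Sum.inl (G.s h)) (Sum.inr (G.t h))
  | half' (h : G.H) : Step G (Sum.inr (G.t h)) (Sum.inl (G.s h))

/-- The path ends at `z`. -/
def EndsAt {k : ℕ} (p : FGHom (lineGraph k) G) : G.E ⊕ G.V → Prop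
  | .inl e => p.fE (Fin.last k, false) = e ∨ p.fE (Fin.last k, true) = e
  | .inr v => ∃ i : Fin k, (i : ℕ) + 1 = k ∧ p.fV i = v

/-- The path starts at `x`. -/
def StartsAt {k : ℕ} (p : FGHom (lineGraph k) G) : G.E ⊕ G.V → Prop
  | .inl e => p.fE (0, false) = e ∨ p.fE (0, true) = e
  | .inr v => ∃ i : Fin k, (i : ℕ) = 0 ∧ p.fV i = v

lemma inPathImage_of_endsAt {k : ℕ} {p : FGHom (lineGraph k) G} {z}
    (h : EndsAt p z) : InPathImage p z := by
  cases z with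
  | inl e =>
    rcases h with h | h
    · exact ⟨(Fin.last k, false), h⟩
    · exact ⟨(Fin.last k, true), h⟩
  | inr v =>
    obtain ⟨i, _, hv⟩ := h
    exact ⟨i, hv⟩

lemma endsAt_inv {k : ℕ} (p : FGHom (lineGraph k) G) {e : G.E}
    (h : EndsAt p (Sum.inl e)) : EndsAt p (Sum.inl (G.inv e)) := by
  rcases h with h | h
  · right; rw [fE_true, h]
  · left; rw [← h, fE_true, G.inv_inv]

lemma append_fE_zero {k : ℕ} (p : FGHom (lineGraph k) G) (h : G.H) (hh)
    (b : Bool) : (append p h hh).fE (0, b) = p.fE (0, b) := by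
  simpa using append_fE_cast p h hh 0 b

lemma im_append {k : ℕ} (p : FGHom (lineGraph k) G) (h : G.H) (hh)
    {x : G.E ⊕ G.V} (hx : InPathImage p x) :
    InPathImage (append p h hh) x := by
  cases x with
  | inl e =>
    obtain ⟨⟨j, b⟩, rfl⟩ := hx
    exact ⟨(j.castSucc, b), append_fE_cast ..⟩
  | inr v =>
    obtain ⟨i, rfl⟩ := hx
    exact ⟨i.castSucc, append_fV_cast ..⟩

lemma startsAt_append {k : ℕ} (p : FGHom (lineGraph k) G) (h : G.H) (hh)
    {x : G.E ⊕ G.V} (hx : StartsAt p x) :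
    StartsAt (append p h hh) x := by
  cases x with
  | inl e =>
    rcases hx with hx | hx
    · exact Or.inl (by rw [append_fE_zero]; exact hx)
    · exact Or.inr (by rw [append_fE_zero]; exact hx)
  | inr v =>
    obtain ⟨i, hi, hv⟩ := hx
    exact ⟨i.castSucc, by simpa using hi, by rw [append_fV_cast]; exact hv⟩

lemma replaceLast_fE_zero {k : ℕ} (p : FGHom (lineGraph (k+1)) G) (h : G.H)
    (ht) (b : Bool) : (replaceLast p h ht).fE (0, b) = p.fE (0, b) := by
  simpa using replaceLast_fE_cast p h ht 0 b

lemma im_replaceLast {k : ℕ} (p : FGHom (lineGraph (k+1)) G) (h : G.H) (ht)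
    {x : G.E ⊕ G.V} (hx : StartsAt p x) :
    InPathImage (replaceLast p h ht) x := by
  cases x with
  | inl e =>
    rcases hx with hx | hx
    · exact ⟨(0, false), by rw [replaceLast_fE_zero]; exact hx⟩
    · exact ⟨(0, true), by rw [replaceLast_fE_zero]; exact hx⟩
  | inr v =>
    obtain ⟨i, _, hv⟩ := hx
    exact ⟨i, hv⟩

lemma startsAt_replaceLast {k : ℕ} (p : FGHom (lineGraph (k+1)) G) (h : G.H)
    (ht) {x : G.E ⊕ G.V} (hx : StartsAt p x) :
    StartsAt (replaceLast p h ht) x := by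
  cases x with
  | inl e =>
    rcases hx with hx | hx
    · exact Or.inl (by rw [replaceLast_fE_zero]; exact hx)
    · exact Or.inr (by rw [replaceLast_fE_zero]; exact hx)
  | inr v =>
    obtain ⟨i, hi, hv⟩ := hx
    exact ⟨i, hi, hv⟩

lemma pathOne_fE (h : G.H) (j : Fin 2) (b : Bool) :
    (pathOne h).fE (j, b) = if (j = 0) = (b = true) then G.s h else G.inv (G.s h) := rfl

lemma pathOne_fE_10 (h : G.H) : (pathOne h).fE (1, false) = G.s h := by
  rw [pathOne_fE]; norm_num

lemma pathOne_fE_01 (h : G.H) : (pathOne h).fE (0, true) = G.s h := by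
  rw [pathOne_fE]; norm_num

lemma pathOne_fE_00 (h : G.H) : (pathOne h).fE (0, false) = G.inv (G.s h) := by
  rw [pathOne_fE]; norm_num

/-- Main construction: a chain of steps from `x` yields a path. -/
lemma exists_path_of_rtg {x z : G.E ⊕ G.V}
    (hr : Relation.ReflTransGen (Step G) x z) :
    x = z ∨ ∃ (k : ℕ) (p : FGHom (lineGraph k) G),
      InPathImage p x ∧ StartsAt p x ∧ EndsAt p z := by
  induction hr with
  | refl => exact Or.inl rfl
  | tail hab hbc ih =>
    right
    rcases ih with rfl | ⟨k, p, him, hst, hend⟩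
    · -- fresh path for the very first step
      cases hbc with
      | inv e =>
        exact ⟨0, pathSingleton e, ⟨(0, false), rfl⟩, Or.inl rfl, Or.inr rfl⟩
      | half h =>
        refine ⟨1, pathOne h, ⟨((1 : Fin 2), false), pathOne_fE_10 h⟩,
          Or.inr (pathOne_fE_01 h), ⟨(0 : Fin 1), rfl, rfl⟩⟩
      | half' h =>
        refine ⟨1, pathOne h, ⟨(0 : Fin 1), rfl⟩, ⟨(0 : Fin 1), rfl, rfl⟩,
          Or.inl (by rw [show Fin.last 1 = (1 : Fin 2) from rfl]; exact pathOne_fE_10 h)⟩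
    · cases hbc with
      | inv e => exact ⟨k, p, him, hst, endsAt_inv p hend⟩
      | half h =>
        rcases hend with h1 | h2
        · -- the inner end of the last pair is `s h`
          cases k with
          | zero =>
            -- rebuild from scratch; the image of `p` is inside that of `pathOne h`
            have htrue : p.fE (0, true) = G.inv (G.s h) := by
              rw [fE_true, show (0 : Fin 1) = Fin.last 0 from rfl, h1]
            have h1' : p.fE (0, false) = G.s h := by
              rw [show (0 : Fin 1) = Fin.last 0 from rfl, h1]
            refine ⟨1, pathOne h, ?_, ?_, ⟨(0 : Fin 1), rfl, rfl⟩⟩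
            · cases x with
              | inl e =>
                obtain ⟨⟨j, b⟩, rfl⟩ := him
                have hj : j = 0 := Fin.ext (by omega)
                subst hj
                cases b
                · exact ⟨((1 : Fin 2), false), by rw [pathOne_fE_10, h1']⟩
                · exact ⟨((0 : Fin 2), false), by rw [pathOne_fE_00, htrue]⟩
              | inr v => obtain ⟨i, _⟩ := him; exact i.elim0
            · cases x with
              | inl e =>
                rcases hst with hx | hx
                · exact Or.inr (by rw [pathOne_fE_01, ← hx, h1'])
                · exact Or.inl (by rw [pathOne_fE_00, ← hx, htrue])
              | inr v => obtain ⟨i, _, _⟩ := hst; exact i.elim0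
          | succ k' =>
            have hsh : G.s h = G.s (p.fH (Fin.last k', false)) := by
              rw [← fE_step, Fin.succ_last, h1]
            have hh : h = p.fH (Fin.last k', false) := G.s_inj hsh
            refine ⟨k' + 1, p, him, hst, ⟨Fin.last k', by simp, ?_⟩⟩
            rw [hh, fV_t]
        · -- the free end of the last pair is `s h`: append
          have hh : G.s h = G.inv (p.fE (Fin.last k, false)) := by
            rw [← h2]; exact fE_true p _
          refine ⟨k + 1, append p h hh, im_append p h hh him,
            startsAt_append p h hh hst, ⟨Fin.last k, by simp, ?_⟩⟩
          rw [append_fV_last]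
      | half' h =>
        obtain ⟨i, hik, hiv⟩ := hend
        cases k with
        | zero => exact i.elim0
        | succ k' =>
          have hi : i = Fin.last k' := Fin.ext (by simpa using hik)
          subst hi
          have ht : G.t h = p.fV (Fin.last k') := hiv.symm
          refine ⟨k' + 1, replaceLast p h ht, im_replaceLast p h ht hst,
            startsAt_replaceLast p h ht hst, Or.inl ?_⟩
          rw [replaceLast_fE_last]; rfl

lemma rtg_of_connected (hc : G.Connected) (x y : G.E ⊕ G.V) :
    Relation.ReflTransGen (Step G) x y := by
  classical
  set c : G.E ⊕ G.V → Bool :=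
    fun z => decide (Relation.ReflTransGen (Step G) x z) with hcdef
  have hinv : ∀ e, c (Sum.inl (G.inv e)) = c (Sum.inl e) := by
    intro e
    simp only [hcdef, decide_eq_decide]
    constructor
    · intro hr
      have := hr.tail (Step.inv (G.inv e))
      rwa [G.inv_inv] at this
    · intro hr; exact hr.tail (Step.inv e)
  have hth : ∀ h, c (Sum.inr (G.t h)) = c (Sum.inl (G.s h)) := by
    intro h
    simp only [hcdef, decide_eq_decide]
    exact ⟨fun hr => hr.tail (Step.half' h), fun hr => hr.tail (Step.half h)⟩
  have h2 := hc.2 (fun e => c (Sum.inl e)) (fun v => c (Sum.inr v)) hinv hth x y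
  have hx : ∀ z, Sum.elim (fun e => c (Sum.inl e)) (fun v => c (Sum.inr v)) z = c z := by
    rintro (e | v) <;> rfl
  rw [hx, hx] at h2
  have hcx : c x = true := by
    simp only [hcdef, decide_eq_true_eq]
    exact Relation.ReflTransGen.refl
  rw [hcx] at h2
  have := h2.symm
  simpa only [hcdef, decide_eq_true_eq] using this

lemma color_const {k : ℕ} (p : FGHom (lineGraph k) G) (cE : G.E → Bool)
    (cV : G.V → Bool) (hinv : ∀ e, cE (G.inv e) = cE e)
    (hth : ∀ h, cV (G.t h) = cE (G.s h)) :
    ∀ z, InPathImage p z → Sum.elim cE cV z = cE (p.fE (0, false)) := by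
  have hvert : ∀ i : Fin k, cV (p.fV i) = cE (p.fE (i.castSucc, false)) := by
    intro i
    rw [← fV_t p i true, hth, ← fE_step', fE_true, hinv]
  have key : ∀ j : Fin (k+1), cE (p.fE (j, false)) = cE (p.fE (0, false)) := by
    intro j
    induction j using Fin.induction with
    | zero => rfl
    | succ i ih =>
      rw [← ih]
      rw [fE_step p i, ← hth, fV_t p i false, hvert]
  rintro (e | v) hz
  · obtain ⟨⟨j, b⟩, rfl⟩ := hz
    cases b
    · exact key j
    · rw [Sum.elim_inl, fE_true, hinv]; exact key j
  · obtain ⟨i, rfl⟩ := hz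
    rw [Sum.elim_inr]; exact (hvert i).trans (key _)

end FGaux

/-- A Feynman graph is connected if and only if it is path connected. -/
theorem connected_iff_pathConnected (G : FG) :
    G.Connected ↔ G.PathConnected := by
  constructor
  · intro hc
    refine ⟨hc.1, fun x y hxy => ?_⟩
    have hr := FGaux.rtg_of_connected hc x y
    rcases FGaux.exists_path_of_rtg hr with rfl | ⟨k, p, him, _, hend⟩
    · exact absurd rfl hxy
    · exact ⟨k, p, him, FGaux.inPathImage_of_endsAt hend⟩
  · intro hp
    refine ⟨hp.1, fun cE cV hinv hth x y => ?_⟩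
    by_cases hxy : x = y
    · rw [hxy]
    · obtain ⟨k, p, hx, hy⟩ := hp.2 x y hxy
      rw [FGaux.color_const p cE cV hinv hth x hx,
        FGaux.color_const p cE cV hinv hth y hy]
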